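/- Two distinct pseudo-MEMs of a pattern P can overlap in at most k - 2 characters, and no pseudo-MEM is contained in (nests inside) another. -/
import Mathlib


open List

variable {α : Type*}

/-- `substr P i j` is the substring `P[i..j]` (inclusive indices). -/
def substr (P : List α) (i j : ℕ) : List α := (P.drop i).take (j - i + 1)

/-- `IsMEM T P i j` : `P[i..j]` is a maximal exact match of `P` w.r.t. `T`:
it occurs in `T`, and it can be extended neither to the left nor to the right
within `P` while still occurring in `T`. -/
def IsMEM (T P : List α) (i j : ℕ) : Prop :=
  i ≤ j ∧ j < P.length ∧ substr P i j <:+: T ∧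
  (i = 0 ∨ ¬ substr P (i - 1) j <:+: T) ∧
  (j = P.length - 1 ∨ ¬ substr P i (j + 1) <:+: T)

/-- All length-`k` substrings (`k`-mers) of `S` pass the filter `F`. -/
def kmersPass (F : List α → Bool) (k : ℕ) (S : List α) : Prop :=
  ∀ w : List α, w.length = k → w <:+: S → F w = true

/-- `IsPseudoMEM F k L P i j` : `P[i..j]` is a maximal substring of `P` of length
at least `L` all of whose `k`-mers pass the filter `F`. -/
def IsPseudoMEM (F : List α → Bool) (k L : ℕ) (P : List α) (i j : ℕ) : Prop :=
  i ≤ j ∧ j < P.length ∧ L ≤ j - i + 1 ∧ kmersPass F k (substr P i j) ∧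
  (i = 0 ∨ ¬ kmersPass F k (substr P (i - 1) j)) ∧
  (j = P.length - 1 ∨ ¬ kmersPass F k (substr P i (j + 1)))

/-- `F` has no false negatives for the `k`-mers of `T`. -/
def NoFalseNeg (F : List α → Bool) (k : ℕ) (T : List α) : Prop :=
  ∀ w : List α, w.length = k → w <:+: T → F w = true

lemma substr_eq_take_drop (P : List α) (i j : ℕ) :
    substr P i j = (P.drop i).take (j - i + 1) := rfl

lemma substr_infix_substr (P : List α) {i1 j1 i j : ℕ} (h1 : i1 ≤ i) (h2 : i ≤ j)
    (h3 : j ≤ j1) : substr P i j <:+: substr P i1 j1 := by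
  have key : substr P i j = (((substr P i1 j1).drop (i - i1)).take (j - i + 1)) := by
    simp only [substr, List.drop_take, List.drop_drop, List.take_take]
    have hi : i1 + (i - i1) = i := by omega
    have hm : (j - i + 1) ⊓ (j1 - i1 + 1 - (i - i1)) = j - i + 1 := by omega
    rw [hi, hm]
  rw [key]
  exact (List.take_prefix _ _).isInfix.trans (List.drop_suffix _ _).isInfix

lemma kmersPass_of_infix {F : List α → Bool} {k : ℕ} {S T : List α}
    (h : kmersPass F k S) (hTS : T <:+: S) : kmersPass F k T :=
  fun w hw hwT => h w hw (hwT.trans hTS)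

/-- Every `k`-mer of `substr P i j` is `substr P s (s+k-1)` for some admissible `s`. -/
lemma kmer_of_substr (P : List α) {i j k : ℕ} (hij : i ≤ j) (hk : 1 ≤ k)
    {w : List α} (hw : w.length = k) (hinf : w <:+: substr P i j) :
    ∃ s, i ≤ s ∧ s + k - 1 ≤ j ∧ w = substr P s (s + k - 1) := by
  obtain ⟨u, t, hut⟩ := hinf
  set m := u.length with hm
  have hdrop : (substr P i j).drop m = w ++ t := by
    rw [← hut, List.append_assoc, List.drop_append_of_le_length (by simp [hm]),
      List.drop_length, List.nil_append]
  have hw' : w = ((substr P i j).drop m).take k := by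
    rw [hdrop, ← hw, List.take_left' rfl]
  rw [substr_eq_take_drop, List.drop_take, List.drop_drop, List.take_take] at hw'
  have hlen := congrArg List.length hw'
  rw [hw, List.length_take, List.length_drop] at hlen
  have hkle : k ≤ j - i + 1 - m := by omega
  refine ⟨i + m, by omega, by omega, ?_⟩
  rw [substr_eq_take_drop]
  have h1 : i + m + k - 1 - (i + m) + 1 = k := by omega
  have h2 : k ⊓ (j - i + 1 - m) = k := by omega
  rw [h1, hw', h2]

/-- two distinct pseudo-MEMs of `P` cannot nest, and if they are
ordered `i1 < i2` they overlap in at most `k - 2` characters. -/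
theorem pseudoMEMs_no_nest_overlap (F : List α → Bool) (k L : ℕ) (P : List α)
    (hk : 1 ≤ k) (hkL : k < L)
    (i1 j1 i2 j2 : ℕ)
    (h1 : IsPseudoMEM F k L P i1 j1) (h2 : IsPseudoMEM F k L P i2 j2) :
    ((i1, j1) ≠ (i2, j2) → ¬ (i1 ≤ i2 ∧ j2 ≤ j1)) ∧
    (i1 < i2 → j1 < j2 ∧ (j1 : ℤ) - (i2 : ℤ) + 1 ≤ (k : ℤ) - 2) := by
  obtain ⟨hij1, hjP1, hL1, hpass1, hleft1, hright1⟩ := h1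
  obtain ⟨hij2, hjP2, hL2, hpass2, hleft2, hright2⟩ := h2
  have nonest : (i1, j1) ≠ (i2, j2) → ¬ (i1 ≤ i2 ∧ j2 ≤ j1) := by
    rintro hne ⟨hle, hle'⟩
    have hne' : ¬(i1 = i2 ∧ j1 = j2) := by simpa [Prod.ext_iff] using hne
    have hcases : i1 < i2 ∨ j2 < j1 := by omega
    rcases hcases with hcase | hcase
    · -- extend [i2,j2] to the left inside [i1,j1]
      rcases hleft2 with h0 | hbad
      · omega
      · exact hbad (kmersPass_of_infix hpass1
          (substr_infix_substr P (by omega) (by omega) (by omega)))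
    · -- extend [i2,j2] to the right inside [i1,j1]
      rcases hright2 with h0 | hbad
      · omega
      · exact hbad (kmersPass_of_infix hpass1
          (substr_infix_substr P (by omega) (by omega) (by omega)))
  refine ⟨nonest, fun hlt => ?_⟩
  have hj12 : j1 < j2 := by
    by_contra hcon
    exact nonest (by simp [Prod.ext_iff]; omega) ⟨by omega, by omega⟩
  refine ⟨hj12, ?_⟩
  by_contra hcon
  push_neg at hcon
  have hover : i2 + k ≤ j1 + 2 := by omega
  -- all k-mers of the union [i1, j2] pass
  have hunion : kmersPass F k (substr P i1 j2) := by
    intro w hw hwinf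
    obtain ⟨s, hs1, hs2, hs3⟩ := kmer_of_substr P (by omega) hk hw hwinf
    by_cases hsj : s + k - 1 ≤ j1
    · exact hpass1 w hw (hs3 ▸ substr_infix_substr P hs1 (by omega) hsj)
    · exact hpass2 w hw (hs3 ▸ substr_infix_substr P (by omega) (by omega) hs2)
  -- thus [i1, j1] extends to the right, contradicting maximality
  rcases hright1 with h0 | hbad
  · omega
  · exact hbad (kmersPass_of_infix hunion
      (substr_infix_substr P (le_refl i1) (by omega) (by omega)))
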